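/- Let G be a digraph with a global sink. For any two acyclic rotor configurations ρ and ρ' on G, there exists a chip configuration σ on G such that σ(ρ) = ρ'. -/

import Mathlib

/-!
Transitivity of the sandpile action on acyclic rotor configurations (Holroyd et al.,
Lemma 3.14): for any two acyclic rotor configurations ρ, ρ' on a digraph with a global
sink there is a chip configuration σ with σ(ρ) = ρ'.
-/

/-- The out-degree of a vertex. -/
def outdeg {V E : Type} [Fintype E] [DecidableEq V] (tail : E → V) (v : V) : ℕ :=
  (Finset.univ.filter (fun e => tail e = v)).card

/-- The vertices other than the (global) sink `s`. -/
abbrev Vne {V : Type} (s : V) : Type := {v : V // v ≠ s}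

/-- Rotor configurations on the non-sink vertices. -/
abbrev RotorConfig {V E : Type} (tail : E → V) (s : V) : Type :=
  {ρ : Vne s → E // ∀ v, tail (ρ v) = v.1}

/-- A chip-and-rotor state. -/
abbrev CRState {V E : Type} (tail : E → V) (s : V) : Type :=
  (Vne s → ℕ) × RotorConfig tail s

/-- Firing the non-sink vertex `v` in a chip-and-rotor state: the rotor at `v` advances
to the next edge and one chip moves from `v` along it (disappearing at the sink). -/
def crFire {V E : Type} [DecidableEq V] {s : V} (tail head : E → V) (next : E → E)
    (hnext : ∀ e, tail (next e) = tail e)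
    (τ : CRState tail s) (v : Vne s) : CRState tail s :=
  (fun u => (τ.1 u - if u = v then 1 else 0) +
      if u.1 = head (next (τ.2.1 v)) then 1 else 0,
   ⟨Function.update τ.2.1 v (next (τ.2.1 v)), by
      intro u
      rcases eq_or_ne u v with h | h
      · rw [h, Function.update_self, hnext]
        exact τ.2.2 v
      · rw [Function.update_of_ne h]
        exact τ.2.2 u⟩)

/-- A non-sink vertex is active when it holds a chip. -/
def crActive {V E : Type} {s : V} (tail : E → V) (τ : CRState tail s) (v : Vne s) : Prop :=
  1 ≤ τ.1 v

/-- The result of firing the vertices in the list `l` in order. -/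
def crFireList {V E : Type} [DecidableEq V] {s : V} (tail head : E → V) (next : E → E)
    (hnext : ∀ e, tail (next e) = tail e)
    (τ : CRState tail s) : List (Vne s) → CRState tail s
  | [] => τ
  | v :: l => crFireList tail head next hnext (crFire tail head next hnext τ v) l

/-- The firing sequence `l` is legal from `τ`. -/
def crLegal {V E : Type} [DecidableEq V] {s : V} (tail head : E → V) (next : E → E)
    (hnext : ∀ e, tail (next e) = tail e)
    (τ : CRState tail s) : List (Vne s) → Prop
  | [] => True
  | v :: l => crActive tail τ v ∧ crLegal tail head next hnext (crFire tail head next hnext τ v) l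

/-- `σ(ρ) = ρ'`: starting with chips `σ` and rotors `ρ`, all chips can be routed to
the sink by a legal firing sequence, leaving the rotor configuration `ρ'`. -/
def RoutesAll {V E : Type} [DecidableEq V] {s : V} (tail head : E → V) (next : E → E)
    (hnext : ∀ e, tail (next e) = tail e)
    (σ : Vne s → ℕ) (ρ ρ' : RotorConfig tail s) : Prop :=
  ∃ l : List (Vne s), crLegal tail head next hnext (σ, ρ) l ∧
    (∀ v, (crFireList tail head next hnext (σ, ρ) l).1 v = 0) ∧
    (crFireList tail head next hnext (σ, ρ) l).2 = ρ'

/-- The vertex-successor map of a rotor configuration (fixing the sink). -/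
def rotorSucc {V E : Type} [DecidableEq V] (tail head : E → V) (s : V)
    (ρ : RotorConfig tail s) : V → V :=
  fun u => if h : u = s then u else head (ρ.1 ⟨u, h⟩)

/-- A rotor configuration is acyclic when its edges contain no directed cycle. -/
def RAcyclic {V E : Type} [DecidableEq V] (tail head : E → V) (s : V)
    (ρ : RotorConfig tail s) : Prop :=
  ∀ (v : Vne s) (k : ℕ), 0 < k → (rotorSucc tail head s ρ)^[k] v.1 ≠ v.1


set_option linter.unusedSectionVars false
set_option linter.unusedVariables false

open Finset

section SCnt

variable {V E : Type} [DecidableEq V]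

/-- Number of indices `i ∈ [1..n]` such that the `i`-th advance of rotor `e` points to `v`. -/
def sCnt (head : E → V) (next : E → E) (e : E) (n : ℕ) (v : V) : ℕ :=
  ((Finset.range n).filter fun i => head (next^[i+1] e) = v).card

variable (head : E → V) (next : E → E)

lemma sCnt_zero (e : E) (v : V) : sCnt head next e 0 v = 0 := by
  unfold sCnt; rw [Finset.range_zero, Finset.filter_empty, Finset.card_empty]

lemma sCnt_succ (e : E) (n : ℕ) (v : V) :
    sCnt head next e (n+1) v
      = sCnt head next e n v + (if head (next^[n+1] e) = v then 1 else 0) := by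
  unfold sCnt
  rw [Finset.range_add_one, Finset.filter_insert]
  by_cases h : head (next^[n+1] e) = v
  · rw [if_pos h, if_pos h, Finset.card_insert_of_notMem
      (fun hh => lt_irrefl n (Finset.mem_range.mp (Finset.mem_filter.mp hh).1))]
  · rw [if_neg h, if_neg h, add_zero]

lemma sCnt_le (e : E) (n : ℕ) (v : V) : sCnt head next e n v ≤ n := by
  calc sCnt head next e n v ≤ (Finset.range n).card := Finset.card_filter_le _ _
  _ = n := Finset.card_range n

lemma sCnt_mono (e : E) {a b : ℕ} (h : a ≤ b) (v : V) :
    sCnt head next e a v ≤ sCnt head next e b v := by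
  apply Finset.card_le_card
  intro i hi
  simp only [Finset.mem_filter, Finset.mem_range] at hi ⊢
  exact ⟨lt_of_lt_of_le hi.1 h, hi.2⟩

lemma sum_sCnt_fiber (e : E) (n : ℕ) (T : Finset V) :
    (∑ v ∈ T, sCnt head next e n v)
      = ((Finset.range n).filter fun i => head (next^[i+1] e) ∈ T).card := by
  rw [Finset.card_eq_sum_card_fiberwise (f := fun i => head (next^[i+1] e)) (t := T)
    (s := (Finset.range n).filter fun i => head (next^[i+1] e) ∈ T)
    (fun i hi => (Finset.mem_filter.mp hi).2)]
  apply Finset.sum_congr rfl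
  intro v hv
  unfold sCnt
  congr 1
  rw [Finset.filter_filter]
  apply Finset.filter_congr
  intro i _
  constructor
  · intro h; exact ⟨by show head (next^[i+1] e) ∈ T; rw [h]; exact hv, h⟩
  · exact fun h => h.2

lemma sCnt_add (e : E) (a b : ℕ) (v : V) :
    sCnt head next e (a + b) v = sCnt head next e a v + sCnt head next (next^[a] e) b v := by
  induction b with
  | zero => simp [sCnt_zero]
  | succ b ih =>
      rw [show a + (b+1) = (a+b)+1 by omega, sCnt_succ, ih, sCnt_succ]
      have : next^[b + 1] (next^[a] e) = next^[a + b + 1] e := by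
        rw [← Function.iterate_add_apply]
        congr 1
        omega
      rw [this, add_assoc]

lemma sCnt_period (e : E) {p : ℕ} (hp : next^[p] e = e) (a mlt : ℕ) (v : V) :
    sCnt head next e (p * mlt + a) v = mlt * sCnt head next e p v + sCnt head next e a v := by
  have hfix : ∀ t, next^[p * t] e = e := by
    intro t
    rw [Function.iterate_mul]
    exact Function.iterate_fixed hp t
  have hmul : ∀ t, sCnt head next e (p * t) v = t * sCnt head next e p v := by
    intro t
    induction t with
    | zero => simp [sCnt_zero]
    | succ t ih =>
        rw [show p * (t+1) = p * t + p by ring, sCnt_add, hfix, ih]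
        ring
  rw [sCnt_add, hfix, hmul]

end SCnt

section Period

variable {V E : Type} (tail : E → V) (next : E → E)
variable (hnext : ∀ e, tail (next e) = tail e)
variable (hcyc : ∀ e e' : E, tail e = tail e' → ∃ k, next^[k] e = e')

include hnext in
lemma tail_iterate (e : E) (k : ℕ) : tail (next^[k] e) = tail e := by
  induction k with
  | zero => rfl
  | succ k ih => rw [Function.iterate_succ_apply', hnext, ih]

include hnext hcyc in
lemma exists_period [Fintype E] (e : E) : ∃ p, 0 < p ∧ next^[p] e = e := by
  obtain ⟨i, j, hij, hmap⟩ := Finite.exists_ne_map_eq_of_infinite (fun n : ℕ => next^[n] e)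
  -- wlog i < j
  wlog hlt : i < j generalizing i j
  · exact this j i hij.symm hmap.symm (by omega)
  obtain ⟨k, hk⟩ := hcyc (next^[i] e) e (by rw [tail_iterate tail next hnext])
  rw [← Function.iterate_add_apply] at hk
  rcases Nat.eq_zero_or_pos (k + i) with h0 | hpos
  · have hi : i = 0 := by omega
    refine ⟨j, by omega, ?_⟩
    have := hmap
    simp only [hi, Function.iterate_zero_apply] at this
    exact this.symm
  · exact ⟨k + i, hpos, hk⟩

include hcyc in
lemma exists_hit (e e' : E) {p : ℕ} (hp : next^[p] e = e) (hp0 : 0 < p)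
    (ht : tail e = tail e') : ∃ i, i < p ∧ next^[i+1] e = e' := by
  obtain ⟨k, hk⟩ := hcyc e e' ht
  have hfix : ∀ t, next^[p * t] e = e := by
    intro t
    rw [Function.iterate_mul]
    exact Function.iterate_fixed hp t
  have h2 : next^[k % p + p * (k / p)] e = next^[k % p] e := by
    rw [Function.iterate_add_apply, hfix]
  rw [Nat.mod_add_div] at h2
  have hmod : next^[k % p] e = e' := by rw [← h2]; exact hk
  rcases Nat.eq_zero_or_pos (k % p) with h0 | hpos
  · refine ⟨p - 1, by omega, ?_⟩
    rw [show p - 1 + 1 = p by omega, hp]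
    rw [h0] at hmod
    exact hmod
  · have hklt := Nat.mod_lt k hp0
    refine ⟨k % p - 1, by omega, ?_⟩
    rw [show k % p - 1 + 1 = k % p by omega]
    exact hmod

end Period


section MMatrix

variable {ι : Type} [Fintype ι] [DecidableEq ι]

/-- Forward iteration of a matrix `Q` on functions. -/
def Qit (Q : ι → ι → ℚ) : ℕ → (ι → ℚ) → ι → ℚ
  | 0, f => f
  | t+1, f => fun v => ∑ u, Q v u * Qit Q t f u

/-- Transposed iteration of `Q` starting from `b`. -/
def Pit (Q : ι → ι → ℚ) (b : ι → ℚ) : ℕ → ι → ℚ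
  | 0 => b
  | t+1 => fun v => ∑ u, Q u v * Pit Q b t u

variable (Q : ι → ι → ℚ) (hQ0 : ∀ u v, 0 ≤ Q u v) (hrow : ∀ u, (∑ v, Q u v) ≤ 1)

include hQ0 in
lemma Qit_nonneg {f : ι → ℚ} (hf : ∀ v, 0 ≤ f v) : ∀ t v, 0 ≤ Qit Q t f v := by
  intro t
  induction t with
  | zero => exact hf
  | succ t ih =>
      intro v
      exact Finset.sum_nonneg fun u _ => mul_nonneg (hQ0 v u) (ih u)

include hQ0 hrow in
lemma q_le_one : ∀ t v, Qit Q t (fun _ => 1) v ≤ 1 := by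
  intro t
  induction t with
  | zero => intro v; simp [Qit]
  | succ t ih =>
      intro v
      calc (∑ u, Q v u * Qit Q t (fun _ => 1) u) ≤ ∑ u, Q v u * 1 :=
            Finset.sum_le_sum fun u _ => mul_le_mul_of_nonneg_left (ih u) (hQ0 v u)
      _ ≤ 1 := by simpa using hrow v

include hQ0 hrow in
lemma q_mono_step : ∀ t v, Qit Q (t+1) (fun _ => 1) v ≤ Qit Q t (fun _ => 1) v := by
  intro t
  induction t with
  | zero =>
      intro v
      calc (∑ u, Q v u * Qit Q 0 (fun _ => 1) u) = ∑ u, Q v u := by simp [Qit]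
      _ ≤ 1 := hrow v
      _ = Qit Q 0 (fun _ => 1) v := by simp [Qit]
  | succ t ih =>
      intro v
      exact Finset.sum_le_sum fun u _ => mul_le_mul_of_nonneg_left (ih u) (hQ0 v u)

include hQ0 hrow in
lemma q_anti {a b : ℕ} (h : a ≤ b) (v : ι) :
    Qit Q b (fun _ => 1) v ≤ Qit Q a (fun _ => 1) v := by
  induction b with
  | zero => simp_all
  | succ b ih =>
      rcases Nat.eq_or_lt_of_le h with h1 | h1
      · rw [h1]
      · exact le_trans (q_mono_step Q hQ0 hrow b v) (ih (by omega))

include hQ0 hrow in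
lemma q_step_bound {v w : ι} {δ β : ℚ} (hδ : 0 ≤ δ) (hβ : 0 ≤ β)
    (hQvw : δ ≤ Q v w) {t : ℕ} (ht : Qit Q t (fun _ => 1) w ≤ 1 - β) :
    Qit Q (t+1) (fun _ => 1) v ≤ 1 - δ * β := by
  have key : (∑ u, Q v u * Qit Q t (fun _ => 1) u)
      ≤ ∑ u, (Q v u - if u = w then Q v w * β else 0) := by
    apply Finset.sum_le_sum
    intro u _
    by_cases hu : u = w
    · subst hu
      rw [if_pos rfl]
      have := mul_le_mul_of_nonneg_left ht (hQ0 v u)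
      nlinarith [hQ0 v u]
    · rw [if_neg hu, sub_zero]
      exact mul_le_of_le_one_right (hQ0 v u) (q_le_one Q hQ0 hrow t u)
  have : (∑ u, (Q v u - if u = w then Q v w * β else 0))
      = (∑ u, Q v u) - Q v w * β := by
    rw [Finset.sum_sub_distrib, Finset.sum_ite_eq' Finset.univ w (fun _ => Q v w * β)]
    simp
  rw [this] at key
  have h2 : δ * β ≤ Q v w * β := mul_le_mul_of_nonneg_right hQvw hβ
  have h3 := hrow v
  calc Qit Q (t+1) (fun _ => 1) v = ∑ u, Q v u * Qit Q t (fun _ => 1) u := rfl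
  _ ≤ (∑ u, Q v u) - Q v w * β := key
  _ ≤ 1 - δ * β := by linarith

include hQ0 in
lemma q_submul {a : ℕ} {cb : ℚ} (hcb : 0 ≤ cb)
    (hc : ∀ u, Qit Q a (fun _ => 1) u ≤ cb) :
    ∀ t v, Qit Q (a + t) (fun _ => 1) v ≤ cb * Qit Q t (fun _ => 1) v := by
  intro t
  induction t with
  | zero =>
      intro v
      simpa [Qit] using hc v
  | succ t ih =>
      intro v
      rw [show a + (t+1) = (a+t)+1 by omega]
      calc (∑ u, Q v u * Qit Q (a+t) (fun _ => 1) u)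
          ≤ ∑ u, Q v u * (cb * Qit Q t (fun _ => 1) u) :=
            Finset.sum_le_sum fun u _ => mul_le_mul_of_nonneg_left (ih u) (hQ0 v u)
      _ = cb * ∑ u, Q v u * Qit Q t (fun _ => 1) u := by
            rw [Finset.mul_sum]; apply Finset.sum_congr rfl; intros; ring
      _ = cb * Qit Q (t+1) (fun _ => 1) v := rfl

lemma Qit_comp (f : ι → ℚ) : ∀ t, Qit Q t (Qit Q 1 f) = Qit Q (t+1) f := by
  intro t
  induction t with
  | zero => rfl
  | succ t ih =>
      funext v
      show (∑ u, Q v u * Qit Q t (Qit Q 1 f) u) = ∑ u, Q v u * Qit Q (t+1) f u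
      rw [ih]

lemma Pit_pair (b : ι → ℚ) : ∀ t (f : ι → ℚ),
    (∑ v, Pit Q b t v * f v) = ∑ v, b v * Qit Q t f v := by
  intro t
  induction t with
  | zero => intro f; rfl
  | succ t ih =>
      intro f
      have step : (∑ v, Pit Q b (t+1) v * f v)
          = ∑ u, Pit Q b t u * Qit Q 1 f u := by
        show (∑ v, (∑ u, Q u v * Pit Q b t u) * f v) = _
        calc (∑ v, (∑ u, Q u v * Pit Q b t u) * f v)
            = ∑ v, ∑ u, Q u v * Pit Q b t u * f v := by
              apply Finset.sum_congr rfl; intros; rw [Finset.sum_mul]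
        _ = ∑ u, ∑ v, Q u v * Pit Q b t u * f v := Finset.sum_comm
        _ = ∑ u, Pit Q b t u * ∑ v, Q u v * f v := by
              apply Finset.sum_congr rfl; intros
              rw [Finset.mul_sum]; apply Finset.sum_congr rfl; intros; ring
        _ = ∑ u, Pit Q b t u * Qit Q 1 f u := by
              apply Finset.sum_congr rfl; intros; rfl
      rw [step, ih (Qit Q 1 f), Qit_comp]


lemma exists_weights (c : ι → ℕ) (d : ι → ι → ℕ) (hc : ∀ v, 0 < c v)
    (hrowN : ∀ u, (∑ v, d u v) ≤ c u)
    (hreach : ∀ u : ι, ∃ w : ι,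
      Relation.ReflTransGen (fun a b => 1 ≤ d a b) u w ∧ (∑ v, d w v) < c w)
    (b : ι → ℕ) :
    ∃ m : ι → ℕ, ∀ v, b v + ∑ u, d u v * m u ≤ c v * m v := by
  classical
  set C : ℕ := Finset.univ.sup c + 1 with hC
  have hcC : ∀ v, c v < C := fun v => by
    have := Finset.le_sup (f := c) (Finset.mem_univ v); omega
  set δ : ℚ := 1 / C with hδdef
  have hCpos : (0:ℚ) < C := by
    have : 0 < C := by omega
    exact_mod_cast this
  have hδpos : 0 < δ := by rw [hδdef]; positivity
  have hδle1 : δ ≤ 1 := by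
    rw [hδdef, div_le_one hCpos]
    have : (1:ℕ) ≤ C := by omega
    exact_mod_cast this
  set Q : ι → ι → ℚ := fun u v => (d u v : ℚ) / (c u) with hQdef
  have hcast : ∀ u, (0:ℚ) < c u := fun u => by exact_mod_cast hc u
  have hQ0 : ∀ u v, 0 ≤ Q u v := fun u v =>
    div_nonneg (by positivity) (le_of_lt (hcast u))
  have hQrow : ∀ u, (∑ v, Q u v) ≤ 1 := by
    intro u
    rw [hQdef]
    have : (∑ v, (d u v : ℚ) / (c u)) = (∑ v, (d u v:ℚ)) / (c u) := by
      rw [Finset.sum_div]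
    rw [this, div_le_one (hcast u)]
    exact_mod_cast hrowN u
  have hQδ : ∀ u v, 1 ≤ d u v → δ ≤ Q u v := by
    intro u v h
    have h1 : (1:ℚ) ≤ d u v := by exact_mod_cast h
    have h2 : (c u : ℚ) ≤ C := by exact_mod_cast le_of_lt (hcC u)
    rw [hδdef, hQdef]
    exact div_le_div₀ (by positivity) h1 (hcast u) h2
  have hleak : ∀ w, (∑ v, d w v) < c w → Qit Q 1 (fun _ => 1) w ≤ 1 - δ := by
    intro w hw
    have he : Qit Q 1 (fun _ => 1) w = (∑ v, (d w v:ℚ)) / c w := by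
      show (∑ u, Q w u * 1) = _
      simp only [hQdef, mul_one]
      rw [← Finset.sum_div]
    rw [he, div_le_iff₀ (hcast w)]
    have h1 : (∑ v, (d w v:ℚ)) + 1 ≤ (c w : ℚ) := by
      have : (∑ v, d w v) + 1 ≤ c w := hw
      exact_mod_cast this
    have h2 : δ * c w ≤ 1 := by
      rw [hδdef, div_mul_eq_mul_div, one_mul, div_le_one hCpos]
      exact_mod_cast le_of_lt (hcC w)
    nlinarith
  have hbound : ∀ u : ι, ∃ ℓ, 1 ≤ ℓ ∧ Qit Q ℓ (fun _ => 1) u ≤ 1 - δ^ℓ := by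
    intro u
    obtain ⟨w, hrtg, hlk⟩ := hreach u
    have hbase : ∃ ℓ, 1 ≤ ℓ ∧ Qit Q ℓ (fun _ => 1) w ≤ 1 - δ^ℓ :=
      ⟨1, le_refl 1, by simpa [pow_one] using hleak w hlk⟩
    clear hlk
    induction hrtg using Relation.ReflTransGen.head_induction_on with
    | refl => exact hbase
    | head hstep _ ih =>
        obtain ⟨ℓ, hℓ1, hℓ⟩ := ih
        refine ⟨ℓ+1, by omega, ?_⟩
        have hq := q_step_bound Q hQ0 hQrow (le_of_lt hδpos)
          (pow_nonneg (le_of_lt hδpos) ℓ) (hQδ _ _ hstep) hℓ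
        have : δ * δ^ℓ = δ^(ℓ+1) := by ring
        rw [this] at hq
        exact hq
  choose L hL1 hL2 using hbound
  set N : ℕ := Finset.univ.sup L with hN
  have hLN : ∀ u, L u ≤ N := fun u => Finset.le_sup (Finset.mem_univ u)
  set θ : ℚ := 1 - δ^N with hθdef
  have hθ0 : 0 ≤ θ := by
    have h := pow_le_one₀ (le_of_lt hδpos) hδle1 (n := N)
    rw [hθdef]; linarith
  have hθ1 : θ < 1 := by
    have := pow_pos hδpos N
    rw [hθdef]; linarith
  have hqN : ∀ u, Qit Q N (fun _ => 1) u ≤ θ := by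
    intro u
    have h1 : Qit Q N (fun _ => 1) u ≤ Qit Q (L u) (fun _ => 1) u :=
      q_anti Q hQ0 hQrow (hLN u) u
    have h2 : δ^N ≤ δ^(L u) :=
      pow_le_pow_of_le_one (le_of_lt hδpos) hδle1 (hLN u)
    have h3 := hL2 u
    rw [hθdef]; linarith
  have hqθ : ∀ kk v, Qit Q (kk * N) (fun _ => 1) v ≤ θ^kk := by
    intro kk
    induction kk with
    | zero => intro v; simp [Qit]
    | succ kk ih =>
        intro v
        have h1 : Qit Q (N + kk*N) (fun _ => 1) v ≤ θ * Qit Q (kk*N) (fun _ => 1) v :=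
          q_submul Q hQ0 hθ0 hqN (kk*N) v
        rw [show (kk+1)*N = N + kk*N by ring]
        calc Qit Q (N + kk*N) (fun _ => 1) v ≤ θ * Qit Q (kk*N) (fun _ => 1) v := h1
        _ ≤ θ * θ^kk := mul_le_mul_of_nonneg_left (ih v) hθ0
        _ = θ^(kk+1) := by ring
  set β : ι → ℚ := fun v => (b v : ℚ) + (∑ u, (d u v : ℚ)) + 1 with hβdef
  have hβ0 : ∀ v, 0 ≤ β v := by
    intro v
    rw [hβdef]
    have : (0:ℚ) ≤ ∑ u, (d u v : ℚ) := Finset.sum_nonneg fun u _ => by positivity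
    positivity
  set Sβ : ℚ := ∑ v, β v with hSβ
  have hSβ0 : 0 ≤ Sβ := Finset.sum_nonneg fun v _ => hβ0 v
  obtain ⟨K, hK⟩ : ∃ K, Sβ * θ^K ≤ 1 := by
    rcases le_or_gt Sβ 1 with h | h
    · exact ⟨0, by simpa using h⟩
    · obtain ⟨K, hK⟩ := exists_pow_lt_of_lt_one
        (show (0:ℚ) < 1/Sβ by positivity) hθ1
      refine ⟨K, ?_⟩
      have hSpos : (0:ℚ) < Sβ := by linarith
      have h2 := mul_le_mul_of_nonneg_left (le_of_lt hK) (le_of_lt hSpos)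
      have h3 : Sβ * (1/Sβ) = 1 := by field_simp
      linarith
  set T := K * N with hT
  have hP0 : ∀ t v, 0 ≤ Pit Q β t v := by
    intro t
    induction t with
    | zero => exact hβ0
    | succ t ih =>
        intro v
        exact Finset.sum_nonneg fun u _ => mul_nonneg (hQ0 u v) (ih u)
  have hPT : ∀ v, Pit Q β T v ≤ 1 := by
    intro v
    have h1 : Pit Q β T v ≤ ∑ w, Pit Q β T w :=
      Finset.single_le_sum (fun w _ => hP0 T w) (Finset.mem_univ v)
    have h2 : (∑ w, Pit Q β T w) = ∑ w, β w * Qit Q T (fun _ => 1) w := by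
      have := Pit_pair Q β T (fun _ => 1)
      simpa using this
    have h3 : (∑ w, β w * Qit Q T (fun _ => 1) w) ≤ ∑ w, β w * θ^K :=
      Finset.sum_le_sum fun w _ => mul_le_mul_of_nonneg_left (hqθ K w) (hβ0 w)
    have h4 : (∑ w, β w * θ^K) = Sβ * θ^K := by rw [hSβ, Finset.sum_mul]
    linarith
  set y : ι → ℚ := fun v => ∑ t ∈ Finset.range T, Pit Q β t v with hy
  have hy0 : ∀ v, 0 ≤ y v := fun v => Finset.sum_nonneg fun t _ => hP0 t v
  have hyrec : ∀ v, (∑ u, Q u v * y u) = y v + Pit Q β T v - β v := by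
    intro v
    have h1 : (∑ u, Q u v * y u) = ∑ t ∈ Finset.range T, Pit Q β (t+1) v := by
      rw [hy]
      calc (∑ u, Q u v * ∑ t ∈ Finset.range T, Pit Q β t u)
          = ∑ u, ∑ t ∈ Finset.range T, Q u v * Pit Q β t u := by
            apply Finset.sum_congr rfl; intros; rw [Finset.mul_sum]
      _ = ∑ t ∈ Finset.range T, ∑ u, Q u v * Pit Q β t u := Finset.sum_comm
      _ = ∑ t ∈ Finset.range T, Pit Q β (t+1) v := rfl
    rw [h1]
    have h2 := Finset.sum_range_succ' (fun t => Pit Q β t v) T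
    have h3 := Finset.sum_range_succ (fun t => Pit Q β t v) T
    have h4 : Pit Q β 0 v = β v := rfl
    rw [hy]
    simp only [] at h2 h3 ⊢
    linarith [h2, h3]
  refine ⟨fun v => ⌈y v / (c v : ℚ)⌉₊, ?_⟩
  intro v
  rw [← Nat.cast_le (α := ℚ)]
  push_cast
  have hx0 : ∀ u, 0 ≤ y u / (c u:ℚ) := fun u => div_nonneg (hy0 u) (le_of_lt (hcast u))
  have hmx : ∀ u, (⌈y u / (c u:ℚ)⌉₊ : ℚ) ≤ y u / (c u:ℚ) + 1 :=
    fun u => le_of_lt (Nat.ceil_lt_add_one (hx0 u))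
  have hxm : ∀ u, y u / (c u:ℚ) ≤ (⌈y u / (c u:ℚ)⌉₊ : ℚ) := fun u => Nat.le_ceil _
  have hyx : (c v:ℚ) * (y v / (c v:ℚ)) = y v := by
    rw [mul_comm, div_mul_cancel₀ _ (hcast v).ne']
  have key : β v - 1 + ∑ u, Q u v * y u ≤ y v := by
    have k1 := hyrec v
    have k2 := hPT v
    linarith
  have hQy : ∀ u, Q u v * y u = (d u v : ℚ) * (y u / (c u:ℚ)) := by
    intro u
    rw [hQdef]
    ring
  calc (b v:ℚ) + ∑ u, (d u v:ℚ) * (⌈y u / (c u:ℚ)⌉₊:ℚ)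
      ≤ (b v:ℚ) + ∑ u, (d u v:ℚ) * (y u / (c u:ℚ) + 1) := by
        apply add_le_add le_rfl
        apply Finset.sum_le_sum
        intro u _
        exact mul_le_mul_of_nonneg_left (hmx u) (by positivity)
  _ = (b v:ℚ) + ((∑ u, (d u v:ℚ) * (y u / (c u:ℚ))) + (∑ u, (d u v:ℚ))) := by
        rw [← Finset.sum_add_distrib]
        congr 1
        apply Finset.sum_congr rfl
        intros; ring
  _ = β v - 1 + ∑ u, Q u v * y u := by
        rw [hβdef]
        have : (∑ u, Q u v * y u) = ∑ u, (d u v:ℚ) * (y u / (c u:ℚ)) :=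
          Finset.sum_congr rfl fun u _ => hQy u
        rw [this]
        ring
  _ ≤ y v := key
  _ = (c v:ℚ) * (y v / (c v:ℚ)) := hyx.symm
  _ ≤ (c v:ℚ) * (⌈y v / (c v:ℚ)⌉₊:ℚ) := mul_le_mul_of_nonneg_left (hxm v) (le_of_lt (hcast v))

end MMatrix
section Schedule

variable {V E : Type} [Fintype V] [DecidableEq V]
variable (tail head : E → V) (next : E → E) (hnext : ∀ e, tail (next e) = tail e)
variable (s : V) (ρ : RotorConfig tail s)

/-- The rotor configuration after firing each vertex `v` exactly `t v` times from `ρ`. -/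
def rotC (t : Vne s → ℕ) : RotorConfig tail s :=
  ⟨fun v => next^[t v] (ρ.1 v), fun v => by
    rw [tail_iterate tail next hnext]; exact ρ.2 v⟩

/-- Chips received at `v` when each vertex `u` has fired `t u` times from `ρ`. -/
def recvC (t : Vne s → ℕ) (v : Vne s) : ℕ :=
  ∑ u, sCnt head next (ρ.1 u) (t u) v.1

/-- Chips at `v` after the firings `t`, having started from `σ`. -/
def chipsC (σ t : Vne s → ℕ) (v : Vne s) : ℕ :=
  σ v + recvC tail head next s ρ t v - t v

lemma recvC_mono {t t' : Vne s → ℕ} (h : ∀ u, t u ≤ t' u) (v : Vne s) :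
    recvC tail head next s ρ t v ≤ recvC tail head next s ρ t' v :=
  Finset.sum_le_sum fun u _ => sCnt_mono head next (ρ.1 u) (h u) v.1

lemma fire_step (σ t : Vne s → ℕ) (v : Vne s)
    (hchip : ∀ u, t u ≤ σ u + recvC tail head next s ρ t u)
    (hact : 1 ≤ chipsC tail head next s ρ σ t v) :
    crFire tail head next hnext
        (chipsC tail head next s ρ σ t, rotC tail next hnext s ρ t) v
      = (chipsC tail head next s ρ σ (Function.update t v (t v + 1)),
         rotC tail next hnext s ρ (Function.update t v (t v + 1))) := by
  set t' := Function.update t v (t v + 1) with ht'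
  have ht'v : t' v = t v + 1 := Function.update_self v (t v + 1) t
  have ht'u : ∀ u, u ≠ v → t' u = t u := fun u hu => Function.update_of_ne hu _ t
  have hrot : (rotC tail next hnext s ρ t).1 v = next^[t v] (ρ.1 v) := rfl
  have hrecv : ∀ u, recvC tail head next s ρ t' u
      = recvC tail head next s ρ t u
        + (if head (next^[t v + 1] (ρ.1 v)) = u.1 then 1 else 0) := by
    intro u
    unfold recvC
    have hterm : ∀ w : Vne s, sCnt head next (ρ.1 w) (t' w) u.1
        = sCnt head next (ρ.1 w) (t w) u.1
          + (if w = v then (if head (next^[t v + 1] (ρ.1 v)) = u.1 then 1 else 0) else 0) := by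
      intro w
      by_cases hw : w = v
      · subst hw
        rw [if_pos rfl, ht'v, sCnt_succ]
      · rw [if_neg hw, ht'u w hw, add_zero]
    rw [Finset.sum_congr rfl (fun w _ => hterm w), Finset.sum_add_distrib,
      Finset.sum_ite_eq' Finset.univ v]
    simp
  apply Prod.ext
  · funext u
    show (chipsC tail head next s ρ σ t u - if u = v then 1 else 0)
        + (if u.1 = head (next ((rotC tail next hnext s ρ t).1 v)) then 1 else 0)
      = chipsC tail head next s ρ σ t' u
    rw [hrot, ← Function.iterate_succ_apply' next (t v) (ρ.1 v)]
    unfold chipsC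
    rw [hrecv u]
    have hc := hchip u
    have ha : 1 ≤ σ v + recvC tail head next s ρ t v - t v := hact
    by_cases hu : u = v
    · subst hu
      rw [if_pos rfl]
      by_cases hb : u.1 = head (next^[t u + 1] (ρ.1 u))
      · rw [if_pos hb, if_pos hb.symm, ht'v]
        omega
      · rw [if_neg hb, if_neg (fun hh => hb hh.symm), ht'v]
        omega
    · rw [if_neg hu, ht'u u hu]
      by_cases hb : u.1 = head (next^[t v + 1] (ρ.1 v))
      · rw [if_pos hb, if_pos hb.symm]
        omega
      · rw [if_neg hb, if_neg (fun hh => hb hh.symm)]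
        omega
  · apply Subtype.ext
    funext u
    show Function.update (rotC tail next hnext s ρ t).1 v
        (next ((rotC tail next hnext s ρ t).1 v)) u = next^[t' u] (ρ.1 u)
    by_cases hu : u = v
    · subst hu
      rw [Function.update_self, ht'v, hrot, Function.iterate_succ_apply']
    · rw [Function.update_of_ne hu, ht'u u hu]
      rfl

end Schedule
section Schedule2

variable {V E : Type} [Fintype V] [DecidableEq V]
variable (tail head : E → V) (next : E → E) (hnext : ∀ e, tail (next e) = tail e)
variable (s : V) (ρ ρ' : RotorConfig tail s)

lemma nodead (hρ' : RAcyclic tail head s ρ') (σ n t : Vne s → ℕ)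
    (hσ : ∀ v, σ v + recvC tail head next s ρ n v = n v)
    (hrotn : ∀ v, next^[n v] (ρ.1 v) = ρ'.1 v)
    (ht : ∀ v, t v ≤ n v)
    (hchip : ∀ v, t v ≤ σ v + recvC tail head next s ρ t v)
    (hne : ∃ v, t v < n v) :
    ∃ v, t v < n v ∧ 1 ≤ chipsC tail head next s ρ σ t v := by
  classical
  by_contra hcon
  push_neg at hcon
  have heq : ∀ v, t v < n v → σ v + recvC tail head next s ρ t v = t v := by
    intro v hv
    have h1 := hcon v hv
    have h2 := hchip v
    unfold chipsC at h1
    omega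
  set U : Finset (Vne s) := Finset.univ.filter (fun v => t v < n v) with hU
  have hUmem : ∀ v, v ∈ U ↔ t v < n v := by intro v; simp [hU]
  have hUne : U.Nonempty := by
    obtain ⟨v, hv⟩ := hne
    exact ⟨v, (hUmem v).mpr hv⟩
  set U' : Finset V := U.image Subtype.val with hU'
  set B : Vne s → ℕ := fun u => n u - t u with hB
  set G : Vne s → ℕ := fun u =>
    ((Finset.range (B u)).filter
      (fun i => head (next^[i+1] (next^[t u] (ρ.1 u))) ∈ U')).card with hG
  have hGB : ∀ u, G u ≤ B u := fun u =>
    le_trans (Finset.card_filter_le _ _) (le_of_eq (Finset.card_range _))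
  have hdec : ∀ (u v : Vne s), sCnt head next (ρ.1 u) (n u) v.1
      = sCnt head next (ρ.1 u) (t u) v.1
        + sCnt head next (next^[t u] (ρ.1 u)) (B u) v.1 := by
    intro u v
    rw [← sCnt_add head next (ρ.1 u) (t u) (B u) v.1]
    congr 1
    have := ht u
    simp only [hB]
    omega
  have hfib : ∀ u : Vne s,
      (∑ v ∈ U, sCnt head next (next^[t u] (ρ.1 u)) (B u) v.1) = G u := by
    intro u
    have h1 := sum_sCnt_fiber head next (next^[t u] (ρ.1 u)) (B u) U'
    have h2 : (∑ v ∈ U', sCnt head next (next^[t u] (ρ.1 u)) (B u) v)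
        = ∑ v ∈ U, sCnt head next (next^[t u] (ρ.1 u)) (B u) v.1 := by
      rw [hU']
      exact Finset.sum_image (fun a _ b _ h => Subtype.ext h)
    rw [← h2, h1]
  have hsum1 : (∑ v ∈ U, (t v + recvC tail head next s ρ n v))
      = ∑ v ∈ U, (n v + recvC tail head next s ρ t v) := by
    apply Finset.sum_congr rfl
    intro v hv
    have hv' := (hUmem v).mp hv
    have e1 := heq v hv'
    have e2 := hσ v
    omega
  have hsum2 : (∑ v ∈ U, recvC tail head next s ρ n v)
      = (∑ v ∈ U, recvC tail head next s ρ t v) + ∑ u, G u := by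
    unfold recvC
    calc (∑ v ∈ U, ∑ u, sCnt head next (ρ.1 u) (n u) v.1)
        = ∑ u, ∑ v ∈ U, sCnt head next (ρ.1 u) (n u) v.1 := Finset.sum_comm
    _ = ∑ u, ((∑ v ∈ U, sCnt head next (ρ.1 u) (t u) v.1) + G u) := by
        apply Finset.sum_congr rfl
        intro u _
        rw [← hfib u, ← Finset.sum_add_distrib]
        exact Finset.sum_congr rfl fun v _ => hdec u v
    _ = (∑ u, ∑ v ∈ U, sCnt head next (ρ.1 u) (t u) v.1) + ∑ u, G u :=
        Finset.sum_add_distrib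
    _ = (∑ v ∈ U, ∑ u, sCnt head next (ρ.1 u) (t u) v.1) + ∑ u, G u := by
        rw [Finset.sum_comm]
  have hc1 : (∑ v ∈ U, t v) + (∑ u, G u) = ∑ v ∈ U, n v := by
    have e1 : (∑ v ∈ U, t v) + (∑ v ∈ U, recvC tail head next s ρ n v)
        = (∑ v ∈ U, n v) + (∑ v ∈ U, recvC tail head next s ρ t v) := by
      rw [← Finset.sum_add_distrib, ← Finset.sum_add_distrib]
      exact hsum1
    omega
  have hc2 : (∑ v ∈ U, n v) = (∑ v ∈ U, t v) + ∑ v ∈ U, B v := by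
    rw [← Finset.sum_add_distrib]
    apply Finset.sum_congr rfl
    intro v _
    have := ht v
    simp only [hB]
    omega
  have hc3 : (∑ u, B u) = ∑ v ∈ U, B v := by
    rw [← Finset.sum_filter_add_sum_filter_not Finset.univ (fun v => t v < n v) B]
    have hz : (∑ v ∈ Finset.univ.filter (fun v => ¬ t v < n v), B v) = 0 := by
      apply Finset.sum_eq_zero
      intro v hv
      have h1 := (Finset.mem_filter.mp hv).2
      have h2 := ht v
      simp only [hB]
      omega
    rw [hz, add_zero]
  have hGeqB : (∑ u, G u) = ∑ u, B u := by omega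
  have hGB_eq : ∀ u, G u = B u := by
    by_contra hc
    push_neg at hc
    obtain ⟨u0, hu0⟩ := hc
    have hlt : G u0 < B u0 := lt_of_le_of_ne (hGB u0) hu0
    have := Finset.sum_lt_sum (fun i (_ : i ∈ Finset.univ) => hGB i)
      ⟨u0, Finset.mem_univ u0, hlt⟩
    omega
  have hkey : ∀ u ∈ U, head (ρ'.1 u) ∈ U' := by
    intro u hu
    have hultn := (hUmem u).mp hu
    have hBpos : 1 ≤ B u := by simp only [hB]; omega
    have hfull : (Finset.range (B u)).filter
        (fun i => head (next^[i+1] (next^[t u] (ρ.1 u))) ∈ U') = Finset.range (B u) := by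
      apply Finset.eq_of_subset_of_card_le (Finset.filter_subset _ _)
      rw [Finset.card_range]
      exact le_of_eq (hGB_eq u).symm
    have hmem : (B u - 1) ∈ Finset.range (B u) := by
      rw [Finset.mem_range]; omega
    rw [← hfull] at hmem
    have hin := (Finset.mem_filter.mp hmem).2
    rw [← Function.iterate_add_apply] at hin
    rw [show B u - 1 + 1 + t u = n u by simp only [hB]; omega] at hin
    rw [hrotn u] at hin
    exact hin
  have hstepf : ∀ x ∈ U', rotorSucc tail head s ρ' x ∈ U' := by
    intro x hx
    obtain ⟨u, hu, hux⟩ := Finset.mem_image.mp hx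
    have hxval : rotorSucc tail head s ρ' x = head (ρ'.1 u) := by
      rw [← hux]
      unfold rotorSucc
      rw [dif_neg u.2]
    rw [hxval]
    exact hkey u hu
  obtain ⟨u0, hu0⟩ := hUne
  have hiter : ∀ i, (rotorSucc tail head s ρ')^[i] u0.1 ∈ U' := by
    intro i
    induction i with
    | zero => exact Finset.mem_image_of_mem _ hu0
    | succ i ih =>
        rw [Function.iterate_succ_apply']
        exact hstepf _ ih
  obtain ⟨i, j, hij, hmap⟩ := Finite.exists_ne_map_eq_of_infinite
    (fun i : ℕ => (rotorSucc tail head s ρ')^[i] u0.1)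
  wlog hlt : i < j generalizing i j
  · exact this j i hij.symm hmap.symm (by omega)
  have hw := hiter i
  have hwne : (rotorSucc tail head s ρ')^[i] u0.1 ≠ s := by
    obtain ⟨u, _, hux⟩ := Finset.mem_image.mp hw
    rw [← hux]
    exact u.2
  have hcy : (rotorSucc tail head s ρ')^[j - i]
      ((rotorSucc tail head s ρ')^[i] u0.1) = (rotorSucc tail head s ρ')^[i] u0.1 := by
    rw [← Function.iterate_add_apply, show j - i + i = j by omega]
    exact hmap.symm
  exact hρ' ⟨_, hwne⟩ (j - i) (by omega) hcy

end Schedule2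
section Schedule3

variable {V E : Type} [Fintype V] [DecidableEq V]
variable (tail head : E → V) (next : E → E) (hnext : ∀ e, tail (next e) = tail e)
variable (s : V) (ρ ρ' : RotorConfig tail s)

lemma build (hρ' : RAcyclic tail head s ρ') (σ n : Vne s → ℕ)
    (hσ : ∀ v, σ v + recvC tail head next s ρ n v = n v)
    (hrotn : ∀ v, next^[n v] (ρ.1 v) = ρ'.1 v) :
    ∀ (F : ℕ) (t : Vne s → ℕ), (∀ v, t v ≤ n v) →
      (∀ v, t v ≤ σ v + recvC tail head next s ρ t v) →
      ((∑ v, (n v - t v)) ≤ F) →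
      ∃ l, crLegal tail head next hnext
            (chipsC tail head next s ρ σ t, rotC tail next hnext s ρ t) l ∧
        crFireList tail head next hnext
            (chipsC tail head next s ρ σ t, rotC tail next hnext s ρ t) l
          = (chipsC tail head next s ρ σ n, rotC tail next hnext s ρ n) := by
  intro F
  induction F with
  | zero =>
      intro t ht hchip hfuel
      have hz := Finset.sum_eq_zero_iff.mp (Nat.le_zero.mp hfuel)
      have : t = n := funext fun v => by
        have h1 := hz v (Finset.mem_univ v)
        have h2 := ht v
        omega
      subst this
      exact ⟨[], trivial, rfl⟩
  | succ F ih =>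
      intro t ht hchip hfuel
      by_cases hall : ∀ v, t v = n v
      · have : t = n := funext hall
        subst this
        exact ⟨[], trivial, rfl⟩
      · push_neg at hall
        obtain ⟨v0, hv0⟩ := hall
        have hne : ∃ v, t v < n v := ⟨v0, lt_of_le_of_ne (ht v0) hv0⟩
        obtain ⟨v, hvlt, hact⟩ :=
          nodead tail head next s ρ ρ' hρ' σ n t hσ hrotn ht hchip hne
        set t' := Function.update t v (t v + 1) with ht'def
        have ht'v : t' v = t v + 1 := Function.update_self v (t v + 1) t
        have ht'u : ∀ u, u ≠ v → t' u = t u := fun u hu => Function.update_of_ne hu _ t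
        have hle : ∀ u, t u ≤ t' u := by
          intro u
          by_cases h : u = v
          · subst h; rw [ht'v]; omega
          · rw [ht'u u h]
        have ht1 : ∀ u, t' u ≤ n u := by
          intro u
          by_cases h : u = v
          · subst h; rw [ht'v]; omega
          · rw [ht'u u h]; exact ht u
        have hchip' : ∀ u, t' u ≤ σ u + recvC tail head next s ρ t' u := by
          intro u
          have hr := recvC_mono tail head next s ρ hle u
          by_cases h : u = v
          · subst h
            rw [ht'v]
            have ha : 1 ≤ σ u + recvC tail head next s ρ t u - t u := hact
            omega
          · rw [ht'u u h]
            have := hchip u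
            omega
        have hfuel' : (∑ u, (n u - t' u)) ≤ F := by
          have hlt2 : (∑ u, (n u - t' u)) < ∑ u, (n u - t u) := by
            apply Finset.sum_lt_sum
            · intro u _
              by_cases h : u = v
              · subst h; rw [ht'v]; omega
              · rw [ht'u u h]
            · exact ⟨v, Finset.mem_univ v, by rw [ht'v]; omega⟩
          omega
        obtain ⟨l, hleg, hfin⟩ := ih t' ht1 hchip' hfuel'
        have hstep := fire_step tail head next hnext s ρ σ t v hchip hact
        refine ⟨v :: l, ?_, ?_⟩
        · show crActive tail
              (chipsC tail head next s ρ σ t, rotC tail next hnext s ρ t) v ∧ _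
          refine ⟨hact, ?_⟩
          rw [hstep]
          exact hleg
        · show crFireList tail head next hnext
            (crFire tail head next hnext
              (chipsC tail head next s ρ σ t, rotC tail next hnext s ρ t) v) l = _
          rw [hstep]
          exact hfin

lemma schedule (hρ' : RAcyclic tail head s ρ') (n : Vne s → ℕ)
    (hrotn : ∀ v, next^[n v] (ρ.1 v) = ρ'.1 v)
    (hbal : ∀ v, recvC tail head next s ρ n v ≤ n v) :
    ∃ σ, RoutesAll tail head next hnext σ ρ ρ' := by
  set σ : Vne s → ℕ := fun v => n v - recvC tail head next s ρ n v with hσdef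
  have hσ : ∀ v, σ v + recvC tail head next s ρ n v = n v := by
    intro v
    have := hbal v
    simp only [hσdef]
    omega
  have h0 : (chipsC tail head next s ρ σ (fun _ => 0),
      rotC tail next hnext s ρ (fun _ => 0)) = (σ, ρ) := by
    apply Prod.ext
    · funext v
      show σ v + recvC tail head next s ρ (fun _ => 0) v - 0 = σ v
      unfold recvC
      simp [sCnt_zero]
    · apply Subtype.ext
      funext v
      rfl
  obtain ⟨l, hleg, hfin⟩ := build tail head next hnext s ρ ρ' hρ' σ n hσ hrotn
    (∑ v, n v) (fun _ => 0) (fun v => Nat.zero_le _)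
    (fun v => Nat.zero_le _) (le_of_eq (by simp))
  rw [h0] at hleg hfin
  refine ⟨σ, l, hleg, ?_, ?_⟩
  · intro v
    rw [hfin]
    show σ v + recvC tail head next s ρ n v - n v = 0
    have := hσ v
    omega
  · rw [hfin]
    show rotC tail next hnext s ρ n = ρ'
    apply Subtype.ext
    funext v
    exact hrotn v

end Schedule3
/-- **Transitivity.**  Let `G` be a digraph with a global sink.  For any two acyclic
rotor configurations `ρ` and `ρ'` on `G`, there exists a chip configuration `σ` with
`σ(ρ) = ρ'`: adding `σ(v)` chips at each non-sink vertex `v` and routing them all to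
the sink turns `ρ` into `ρ'`. -/
theorem sandpile_action_transitive
    {V E : Type} [Fintype V] [DecidableEq V] [Fintype E]
    (tail head : E → V) (next : E → E)
    (hnext : ∀ e, tail (next e) = tail e)
    (hcyc : ∀ e e' : E, tail e = tail e' → ∃ k, next^[k] e = e')
    (s : V) (hs : outdeg tail s = 0)
    (hglobal : ∀ v : V,
      Relation.ReflTransGen (fun a b => ∃ e, tail e = a ∧ head e = b) v s)
    (ρ ρ' : RotorConfig tail s)
    (hρ : RAcyclic tail head s ρ) (hρ' : RAcyclic tail head s ρ') :
    ∃ σ : Vne s → ℕ, RoutesAll tail head next hnext σ ρ ρ' := by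
  classical
  have hper : ∀ v : Vne s, ∃ p, 0 < p ∧ next^[p] (ρ.1 v) = ρ.1 v :=
    fun v => exists_period tail next hnext hcyc (ρ.1 v)
  choose p hp0 hpfix using hper
  have hkk : ∀ v : Vne s, ∃ k, next^[k] (ρ.1 v) = ρ'.1 v :=
    fun v => hcyc (ρ.1 v) (ρ'.1 v) (by rw [ρ.2 v, ρ'.2 v])
  choose k hk using hkk
  have hsumid : ∀ (e : E) (nn : ℕ),
      (∑ u : Vne s, sCnt head next e nn u.1) + sCnt head next e nn s = nn := by
    intro e nn
    have h1 : (∑ w ∈ Finset.univ.filter (fun w => w ≠ s), sCnt head next e nn w)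
        = ∑ u : Vne s, sCnt head next e nn u.1 :=
      Finset.sum_subtype _ (by intro x; simp) _
    have h2 : (∑ w, sCnt head next e nn w) = nn := by
      rw [sum_sCnt_fiber]
      simp
    rw [← Finset.sum_filter_add_sum_filter_not Finset.univ (fun w => w ≠ s)
      (sCnt head next e nn)] at h2
    have h3 : Finset.univ.filter (fun w => ¬ w ≠ s) = {s} := by
      ext w; simp
    rw [h3, Finset.sum_singleton] at h2
    rw [← h1]
    exact h2
  have hhit1 : ∀ (a : Vne s) (x : V), (∃ e0, tail e0 = a.1 ∧ head e0 = x) →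
      1 ≤ sCnt head next (ρ.1 a) (p a) x := by
    rintro a x ⟨e0, he0t, he0h⟩
    obtain ⟨i, hip, hie⟩ := exists_hit tail next hcyc (ρ.1 a) e0 (hpfix a) (hp0 a)
      (by rw [ρ.2 a, he0t])
    have hmem : i ∈ (Finset.range (p a)).filter
        (fun i => head (next^[i+1] (ρ.1 a)) = x) := by
      simp only [Finset.mem_filter, Finset.mem_range]
      exact ⟨hip, by rw [hie, he0h]⟩
    exact Finset.card_pos.mpr ⟨i, hmem⟩
  have hrowN : ∀ u : Vne s,
      (∑ v : Vne s, sCnt head next (ρ.1 u) (p u) v.1) ≤ p u := by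
    intro u
    have := hsumid (ρ.1 u) (p u)
    omega
  have hreach : ∀ u : Vne s, ∃ w : Vne s,
      Relation.ReflTransGen
        (fun a b : Vne s => 1 ≤ sCnt head next (ρ.1 a) (p a) b.1) u w ∧
      (∑ v : Vne s, sCnt head next (ρ.1 w) (p w) v.1) < p w := by
    have main : ∀ (a : V),
        Relation.ReflTransGen (fun a b => ∃ e, tail e = a ∧ head e = b) a s →
        ∀ (ha : a ≠ s), ∃ w : Vne s,
          Relation.ReflTransGen
            (fun a b : Vne s => 1 ≤ sCnt head next (ρ.1 a) (p a) b.1) ⟨a, ha⟩ w ∧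
          (∑ v : Vne s, sCnt head next (ρ.1 w) (p w) v.1) < p w := by
      intro a hrtg
      induction hrtg using Relation.ReflTransGen.head_induction_on with
      | refl => intro ha; exact absurd rfl ha
      | @head a' c hstep htail ih =>
          intro ha
          by_cases hc : c = s
          · rw [hc] at hstep
            refine ⟨⟨a', ha⟩, Relation.ReflTransGen.refl, ?_⟩
            have h1 := hhit1 ⟨a', ha⟩ s hstep
            have h2 := hsumid (ρ.1 ⟨a', ha⟩) (p ⟨a', ha⟩)
            omega
          · obtain ⟨w, hw1, hw2⟩ := ih hc
            refine ⟨w, Relation.ReflTransGen.head ?_ hw1, hw2⟩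
            exact hhit1 ⟨a', ha⟩ c hstep
    intro u
    have := main u.1 (hglobal u.1) u.2
    exact this
  obtain ⟨m, hm⟩ := exists_weights p (fun u v => sCnt head next (ρ.1 u) (p u) v.1)
    hp0 hrowN hreach (fun _ => ∑ u : Vne s, k u)
  set n : Vne s → ℕ := fun v => k v + p v * m v with hn
  have hrotn : ∀ v, next^[n v] (ρ.1 v) = ρ'.1 v := by
    intro v
    simp only [hn]
    rw [Function.iterate_add_apply, Function.iterate_mul,
      Function.iterate_fixed (hpfix v) (m v)]
    exact hk v
  have hbal : ∀ v, recvC tail head next s ρ n v ≤ n v := by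
    intro v
    unfold recvC
    have hterm : ∀ u : Vne s, sCnt head next (ρ.1 u) (n u) v.1
        ≤ k u + sCnt head next (ρ.1 u) (p u) v.1 * m u := by
      intro u
      have h1 : n u = p u * m u + k u := by simp only [hn]; ring
      rw [h1, sCnt_period head next (ρ.1 u) (hpfix u) (k u) (m u) v.1]
      have h2 := sCnt_le head next (ρ.1 u) (k u) v.1
      have h3 : m u * sCnt head next (ρ.1 u) (p u) v.1
          = sCnt head next (ρ.1 u) (p u) v.1 * m u := mul_comm _ _
      omega
    calc (∑ u : Vne s, sCnt head next (ρ.1 u) (n u) v.1)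
        ≤ ∑ u : Vne s, (k u + sCnt head next (ρ.1 u) (p u) v.1 * m u) :=
          Finset.sum_le_sum fun u _ => hterm u
    _ = (∑ u : Vne s, k u)
        + ∑ u : Vne s, sCnt head next (ρ.1 u) (p u) v.1 * m u :=
          Finset.sum_add_distrib
    _ ≤ p v * m v := hm v
    _ ≤ n v := by simp only [hn]; omega
  exact schedule tail head next hnext s ρ ρ' hρ' n hrotn hbal
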